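/- arXiv:1905.07361 — 5 statements merged into one kernel-verified Lean document; each statement's English description precedes it below -/
import Mathlib

section
/- Among all probability distributions q on ℕ with mean N, the distribution maximizing H(q) + ∑_k q(k) log₂(k+1) (where H is the Shannon entropy) is q(k) = 4(k+1) N^k / (N+2)^{k+2}. -/
/-- The maximizing distribution `q* k = 4 (k+1) N^k / (N+2)^(k+2)`. -/
noncomputable def qstar (N : ℝ) (k : ℕ) : ℝ := 4 * ((k : ℝ) + 1) * N ^ k / (N + 2) ^ (k + 2)

lemma qstar_pos {N : ℝ} (hN : 0 < N) (k : ℕ) : 0 < qstar N k := by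
  unfold qstar; positivity

lemma qstar_eq {N : ℝ} (hN : 0 < N) (k : ℕ) :
    qstar N k = (4 / (N + 2) ^ 2) * (((k : ℝ) + 1) * (N / (N + 2)) ^ k) := by
  have h2 : (0:ℝ) < N + 2 := by linarith
  unfold qstar
  rw [div_pow, pow_add]
  field_simp

lemma norm_ratio_lt_one {N : ℝ} (hN : 0 < N) : ‖N / (N + 2)‖ < 1 := by
  have h2 : (0:ℝ) < N + 2 := by linarith
  rw [Real.norm_eq_abs, abs_of_pos (by positivity), div_lt_one h2]
  linarith

lemma hasSum_qstar {N : ℝ} (hN : 0 < N) : HasSum (qstar N) 1 := by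
  have h2 : (0:ℝ) < N + 2 := by linarith
  have h1 := hasSum_choose_mul_geometric_of_norm_lt_one (𝕜 := ℝ) 1 (norm_ratio_lt_one hN)
  have key := h1.mul_left (4 / (N + 2) ^ 2)
  convert key using 1
  · rfl
  · funext k
    rw [qstar_eq hN k]
    simp [Nat.choose_one_right]
  · have h1r : 1 - N / (N + 2) = 2 / (N + 2) := by field_simp; ring
    rw [h1r, div_pow, one_div_div]
    field_simp
    ring

lemma hasSum_kk1_geom {r : ℝ} (hr : ‖r‖ < 1) :
    HasSum (fun k : ℕ => (k : ℝ) * ((k : ℝ) + 1) * r ^ k) (2 / (1 - r) ^ 3 - 2 / (1 - r) ^ 2) := by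
  have h1 := hasSum_choose_mul_geometric_of_norm_lt_one (𝕜 := ℝ) 1 hr
  have h2 := hasSum_choose_mul_geometric_of_norm_lt_one (𝕜 := ℝ) 2 hr
  have key := (h2.mul_left 2).sub (h1.mul_left 2)
  convert key using 1
  · rfl
  · funext k
    have hc2 : ((k + 2).choose 2 : ℝ) = ((k : ℝ) + 2) * ((k : ℝ) + 1) / 2 := by
      rw [Nat.cast_choose_two]; push_cast; ring
    have hc1 : ((k + 1).choose 1 : ℝ) = (k : ℝ) + 1 := by
      rw [Nat.choose_one_right]; push_cast; ring
    rw [hc2, hc1]; ring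
  · ring

lemma hasSum_mul_qstar {N : ℝ} (hN : 0 < N) :
    HasSum (fun k : ℕ => (k : ℝ) * qstar N k) N := by
  have h2 : (0:ℝ) < N + 2 := by linarith
  have key := (hasSum_kk1_geom (norm_ratio_lt_one hN)).mul_left (4 / (N + 2) ^ 2)
  convert key using 1
  · rfl
  · funext k
    rw [qstar_eq hN k]
    ring
  · have h1r : 1 - N / (N + 2) = 2 / (N + 2) := by field_simp; ring
    rw [h1r]
    field_simp
    ring

lemma log_qstar {N : ℝ} (hN : 0 < N) (k : ℕ) :
    Real.log ((k : ℝ) + 1) - Real.log (qstar N k) =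
      (2 * Real.log (N + 2) - Real.log 4) + (Real.log (N + 2) - Real.log N) * k := by
  have h2 : (0:ℝ) < N + 2 := by linarith
  have hk1 : (0:ℝ) < (k : ℝ) + 1 := by positivity
  unfold qstar
  rw [Real.log_div (by positivity) (by positivity),
    Real.log_mul (by positivity) (by positivity),
    Real.log_mul (by norm_num) (by positivity),
    Real.log_pow, Real.log_pow]
  push_cast
  ring

/-- Among probability distributions on ℕ with mean `N`, the functional
`F(q) = -∑ q k logb 2 (q k) + ∑ q k logb 2 (k+1)` is maximized by `qstar N`. -/
theorem stmt2 (N : ℝ) (hN : 0 < N) (q : ℕ → ℝ)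
    (hq0 : ∀ k, 0 ≤ q k)
    (hqs : Summable q) (hqsum : ∑' k : ℕ, q k = 1)
    (hqms : Summable fun k : ℕ => (k : ℝ) * q k) (hqmean : ∑' k : ℕ, (k : ℝ) * q k = N)
    (hFs : Summable fun k : ℕ => -(q k) * Real.logb 2 (q k) + q k * Real.logb 2 ((k : ℝ) + 1)) :
    (∑' k : ℕ, (-(q k) * Real.logb 2 (q k) + q k * Real.logb 2 ((k : ℝ) + 1))) ≤
      ∑' k : ℕ, (-(qstar N k) * Real.logb 2 (qstar N k)
        + qstar N k * Real.logb 2 ((k : ℝ) + 1)) := by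
  have hlog2 : (0:ℝ) < Real.log 2 := Real.log_pos one_lt_two
  set A : ℝ := 2 * Real.log (N + 2) - Real.log 4 with hA
  set B : ℝ := Real.log (N + 2) - Real.log N with hB
  -- natural-log versions of the functionals
  set f : ℕ → ℝ := fun k => -(q k) * Real.log (q k) + q k * Real.log ((k : ℝ) + 1) with hf
  set g : ℕ → ℝ := fun k =>
    -(qstar N k) * Real.log (qstar N k) + qstar N k * Real.log ((k : ℝ) + 1) with hg
  -- rewrite goal in terms of natural logs
  have hfb : ∀ (p : ℕ → ℝ) (k : ℕ),
      -(p k) * Real.logb 2 (p k) + p k * Real.logb 2 ((k : ℝ) + 1) =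
        (-(p k) * Real.log (p k) + p k * Real.log ((k : ℝ) + 1)) / Real.log 2 := by
    intro p k
    rw [Real.logb, Real.logb]
    ring
  -- summability of f
  have hfq : Summable f := by
    have := hFs.mul_right (Real.log 2)
    refine this.congr fun k => ?_
    rw [hfb q k, div_mul_cancel₀ _ (Real.log_pos one_lt_two).ne']
  -- each q k ≤ 1
  have hq1 : ∀ k, q k ≤ 1 := by
    intro k
    rw [← hqsum]
    exact Summable.le_tsum hqs k fun j _ => hq0 j
  -- summability of pieces
  have hS2 : Summable (fun k => q k * Real.log ((k : ℝ) + 1)) := by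
    refine Summable.of_nonneg_of_le (fun k => ?_) (fun k => ?_) hqms
    · exact mul_nonneg (hq0 k) (Real.log_nonneg (by linarith [Nat.cast_nonneg (α := ℝ) k]))
    · have hlk : Real.log ((k : ℝ) + 1) ≤ (k : ℝ) := by
        have := Real.log_le_sub_one_of_pos (x := (k : ℝ) + 1) (by positivity)
        linarith
      calc q k * Real.log ((k : ℝ) + 1) ≤ q k * (k : ℝ) :=
            mul_le_mul_of_nonneg_left hlk (hq0 k)
        _ = (k : ℝ) * q k := by ring
  have hS1 : Summable (fun k => -(q k) * Real.log (q k)) := by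
    refine (hfq.sub hS2).congr fun k => ?_
    simp [hf]
  -- summability of q k * log (qstar N k)
  have hlinq : Summable (fun k => q k * (A + B * k)) := by
    refine ((hqs.mul_left A).add (hqms.mul_left B)).congr fun k => ?_
    ring
  have hlogq : Summable (fun k => q k * Real.log (qstar N k)) := by
    refine (hS2.sub hlinq).congr fun k => ?_
    have h := log_qstar hN k
    have : Real.log (qstar N k) = Real.log ((k : ℝ) + 1) - (A + B * k) := by
      rw [hA, hB]; linarith [h]
    rw [this]
    ring
  have hKLs : Summable (fun k => q k * (Real.log (qstar N k) - Real.log (q k))) := by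
    refine (hlogq.add hS1).congr fun k => ?_
    ring
  -- Gibbs' inequality: the relative-entropy term is ≤ 0
  have hsub : HasSum (fun k => qstar N k - q k) 0 := by
    have := (hasSum_qstar hN).sub hqs.hasSum
    rw [hqsum] at this
    simpa using this
  have hKL : (∑' k, q k * (Real.log (qstar N k) - Real.log (q k))) ≤ 0 := by
    have hpt : ∀ k, q k * (Real.log (qstar N k) - Real.log (q k)) ≤ qstar N k - q k := by
      intro k
      rcases eq_or_lt_of_le (hq0 k) with h0 | h0
      · rw [← h0]
        simpa using (qstar_pos hN k).le
      · have hp := qstar_pos hN k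
        have hlog : Real.log (qstar N k) - Real.log (q k) = Real.log (qstar N k / q k) :=
          (Real.log_div hp.ne' h0.ne').symm
        rw [hlog]
        have := Real.log_le_sub_one_of_pos (x := qstar N k / q k) (by positivity)
        calc q k * Real.log (qstar N k / q k) ≤ q k * (qstar N k / q k - 1) :=
              mul_le_mul_of_nonneg_left this h0.le
          _ = qstar N k - q k := by field_simp
    have := Summable.tsum_le_tsum hpt hKLs hsub.summable
    rwa [hsub.tsum_eq] at this
  -- the linear part sums to A + B * N for q
  have hlinq_sum : HasSum (fun k => q k * (A + B * k)) (A + B * N) := by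
    have h1 : HasSum (fun k => A * q k) (A * 1) := by
      have := hqs.hasSum
      rw [hqsum] at this
      exact this.mul_left A
    have h2 : HasSum (fun k : ℕ => B * ((k : ℝ) * q k)) (B * N) := by
      have := hqms.hasSum
      rw [hqmean] at this
      exact this.mul_left B
    have h3 := h1.add h2
    simp only [mul_one] at h3
    have heq : (fun k : ℕ => q k * (A + B * k)) =
        fun k : ℕ => A * q k + B * ((k : ℝ) * q k) := by
      funext k; ring
    rw [heq]
    exact h3
  -- decompose tsum f
  have hdecomp : (∑' k, f k) =
      (∑' k, q k * (Real.log (qstar N k) - Real.log (q k))) + (∑' k, q k * (A + B * k)) := by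
    rw [← Summable.tsum_add hKLs hlinq_sum.summable]
    refine tsum_congr fun k => ?_
    have h := log_qstar hN k
    have hlq : Real.log (qstar N k) = Real.log ((k : ℝ) + 1) - (A + B * k) := by
      rw [hA, hB]; linarith [h]
    simp only [hf]
    rw [hlq]
    ring
  have hfle : (∑' k, f k) ≤ A + B * N := by
    rw [hdecomp, hlinq_sum.tsum_eq]
    linarith [hKL]
  -- tsum g equals A + B * N exactly
  have hg_sum : HasSum g (A + B * N) := by
    have h1 : HasSum (fun k => A * qstar N k) (A * 1) := (hasSum_qstar hN).mul_left A
    have h2 : HasSum (fun k : ℕ => B * ((k : ℝ) * qstar N k)) (B * N) :=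
      (hasSum_mul_qstar hN).mul_left B
    have h3 := h1.add h2
    simp only [mul_one] at h3
    have heq : g = fun k : ℕ => A * qstar N k + B * ((k : ℝ) * qstar N k) := by
      funext k
      have h := log_qstar hN k
      have hlq : Real.log (qstar N k) = Real.log ((k : ℝ) + 1) - (A + B * k) := by
        rw [hA, hB]; linarith [h]
      simp only [hg]
      rw [hlq]
      ring
    rw [heq]
    exact h3
  -- conclude
  calc (∑' k : ℕ, (-(q k) * Real.logb 2 (q k) + q k * Real.logb 2 ((k : ℝ) + 1)))
      = (∑' k, f k) / Real.log 2 := by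
        rw [← tsum_div_const]
        exact tsum_congr fun k => hfb q k
    _ ≤ (∑' k, g k) / Real.log 2 := by
        rw [hg_sum.tsum_eq]
        gcongr
    _ = ∑' k : ℕ, (-(qstar N k) * Real.logb 2 (qstar N k)
        + qstar N k * Real.logb 2 ((k : ℝ) + 1)) := by
        rw [← tsum_div_const]
        exact (tsum_congr fun k => hfb (qstar N) k).symm
end

section
/- For the uniform joint distribution p(x,y) = 1/((2N+1)(x+1)) · [uniform over y given x] on {(x,y) : 0 ≤ x ≤ 2N, 0 ≤ y ≤ x} with P(X=x) = 1/(2N+1) and Y uniform on {0,…,x} given X=x, the Shannon entropy equals log₂(2N+1) + (1/(2N+1)) ∑_{x=0}^{2N} log₂(x+1) = log₂(2N+1) + (1/(2N+1)) log₂((2N+1)!). -/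
lemma sum_logb_factorial (n : ℕ) :
    (∑ x ∈ Finset.range n, Real.logb 2 ((x : ℝ) + 1)) =
      Real.logb 2 ((Nat.factorial n : ℝ)) := by
  induction n with
  | zero => simp
  | succ n ih =>
    rw [Finset.sum_range_succ, ih, Nat.factorial_succ, Nat.cast_mul,
      Real.logb_mul (by positivity) (by positivity)]
    push_cast
    ring

lemma first_eq (N : ℕ) :
    (∑ x ∈ Finset.range (2 * N + 1), ∑ y ∈ Finset.range (x + 1),
        -(1 / (((2 * N : ℕ) + 1 : ℝ) * ((x : ℝ) + 1))) *
          Real.logb 2 (1 / (((2 * N : ℕ) + 1 : ℝ) * ((x : ℝ) + 1)))) =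
      Real.logb 2 ((2 * N : ℕ) + 1 : ℝ)
        + (1 / ((2 * N : ℕ) + 1 : ℝ)) *
            ∑ x ∈ Finset.range (2 * N + 1), Real.logb 2 ((x : ℝ) + 1) := by
  set M : ℝ := ((2 * N : ℕ) + 1 : ℝ) with hM
  have hMpos : 0 < M := by positivity
  have key : ∀ x ∈ Finset.range (2 * N + 1),
      (∑ y ∈ Finset.range (x + 1),
        -(1 / (M * ((x : ℝ) + 1))) * Real.logb 2 (1 / (M * ((x : ℝ) + 1)))) =
      (1 / M) * Real.logb 2 M + (1 / M) * Real.logb 2 ((x : ℝ) + 1) := by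
    intro x _
    have hx : (0 : ℝ) < (x : ℝ) + 1 := by positivity
    rw [Finset.sum_const, Finset.card_range]
    rw [one_div, Real.logb_inv, Real.logb_mul (ne_of_gt hMpos) (ne_of_gt hx)]
    rw [nsmul_eq_mul]
    push_cast
    field_simp
  rw [Finset.sum_congr rfl key, Finset.sum_add_distrib, Finset.sum_const,
    Finset.card_range, ← Finset.mul_sum]
  rw [nsmul_eq_mul]
  have : ((2 * N + 1 : ℕ) : ℝ) = M := by push_cast [hM]; ring
  rw [this]
  field_simp

/-- Entropy of the joint pmf `p(x,y) = 1/((2N+1)(x+1))` on `{x ≤ 2N, y ≤ x}`. -/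
theorem stmt7 (N : ℕ) :
    (∑ x ∈ Finset.range (2 * N + 1), ∑ y ∈ Finset.range (x + 1),
        -(1 / (((2 * N : ℕ) + 1 : ℝ) * ((x : ℝ) + 1))) *
          Real.logb 2 (1 / (((2 * N : ℕ) + 1 : ℝ) * ((x : ℝ) + 1)))) =
      Real.logb 2 ((2 * N : ℕ) + 1 : ℝ)
        + (1 / ((2 * N : ℕ) + 1 : ℝ)) *
            ∑ x ∈ Finset.range (2 * N + 1), Real.logb 2 ((x : ℝ) + 1) ∧
    (∑ x ∈ Finset.range (2 * N + 1), ∑ y ∈ Finset.range (x + 1),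
        -(1 / (((2 * N : ℕ) + 1 : ℝ) * ((x : ℝ) + 1))) *
          Real.logb 2 (1 / (((2 * N : ℕ) + 1 : ℝ) * ((x : ℝ) + 1)))) =
      Real.logb 2 ((2 * N : ℕ) + 1 : ℝ)
        + (1 / ((2 * N : ℕ) + 1 : ℝ)) * Real.logb 2 ((Nat.factorial (2 * N + 1) : ℝ)) := by
  refine ⟨first_eq N, ?_⟩
  rw [first_eq N, sum_logb_factorial]
end

section
/- Let R(N) = H(p_{X,Y}) / log₂((2N+1)(N+1)), where H(p_{X,Y}) is the Shannon entropy of the joint distribution p(x,y) = (2/(N+2))²(N/(N+2))^x on {(x,y) ∈ ℕ² : y ≤ x}. Then R(N) → 1 as N → ∞. -/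
open Filter Real

/-- Closed form for the entropy sum. -/
lemma entropy_closed_form {N : ℝ} (hN : 0 < N) :
    (∑' x : ℕ, ∑ y ∈ Finset.range (x + 1),
        -((2 / (N + 2)) ^ 2 * (N / (N + 2)) ^ x) *
          Real.logb 2 ((2 / (N + 2)) ^ 2 * (N / (N + 2)) ^ x))
    = -Real.logb 2 ((2 / (N + 2)) ^ 2) - N * Real.logb 2 (N / (N + 2)) := by
  have hN2 : (0:ℝ) < N + 2 := by linarith
  set r : ℝ := N / (N + 2) with hrdef
  set a : ℝ := (2 / (N + 2)) ^ 2 with hadef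
  have hr0 : 0 < r := div_pos hN hN2
  have hr1 : r < 1 := (div_lt_one hN2).2 (by linarith)
  have ha0 : 0 < a := by positivity
  have hrn : ‖r‖ < 1 := by rw [Real.norm_eq_abs, abs_of_pos hr0]; exact hr1
  have h1r : 1 - r = 2 / (N + 2) := by
    rw [hrdef]; field_simp
    ring
  have h1r0 : (0:ℝ) < 1 - r := by linarith
  -- basic hasSum facts
  have H1 : HasSum (fun n : ℕ => ((n : ℝ) + 1) * r ^ n) (1 / (1 - r) ^ 2) := by
    have := hasSum_choose_mul_geometric_of_norm_lt_one (𝕜 := ℝ) 1 hrn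
    convert this using 2 with n
    case e'_3 => rfl
    simp [Nat.choose_one_right]
  have H2 : HasSum (fun n : ℕ => (((n : ℝ) + 1) * ((n : ℝ) + 2) / 2) * r ^ n)
      (1 / (1 - r) ^ 3) := by
    have := hasSum_choose_mul_geometric_of_norm_lt_one (𝕜 := ℝ) 2 hrn
    convert this using 2 with n
    case e'_3 => rfl
    have h : 2 * (n + 2).choose 2 = (n + 2) * (n + 1) := by
      rw [Nat.choose_two_right, show n + 2 - 1 = n + 1 from rfl,
        Nat.mul_div_cancel' (by rw [mul_comm]; exact (Nat.even_mul_succ_self (n+1)).two_dvd)]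
    have hc := congrArg (fun k : ℕ => (k : ℝ)) h
    push_cast at hc
    have : ((n + 2).choose 2 : ℝ) = ((n:ℝ) + 1) * ((n:ℝ) + 2) / 2 := by linarith
    rw [this]
  have H3 : HasSum (fun n : ℕ => ((n : ℝ) * ((n : ℝ) + 1)) * r ^ n)
      (2 * (1 / (1 - r) ^ 3) - 2 * (1 / (1 - r) ^ 2)) := by
    have := (H2.mul_left 2).sub (H1.mul_left 2)
    convert this using 2 with n
    case e'_3 => rfl
    ring
  -- pointwise rewrite of the inner sum
  have hpt : ∀ x : ℕ, (∑ y ∈ Finset.range (x + 1),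
      -(a * r ^ x) * Real.logb 2 (a * r ^ x))
      = -(a * Real.logb 2 a) * (((x:ℝ) + 1) * r ^ x)
        + -(a * Real.logb 2 r) * (((x:ℝ) * ((x:ℝ) + 1)) * r ^ x) := by
    intro x
    rw [Finset.sum_const, Finset.card_range, nsmul_eq_mul,
      Real.logb_mul ha0.ne' (pow_ne_zero _ hr0.ne'), Real.logb_pow 2 r x]
    push_cast
    ring
  rw [tsum_congr hpt,
    ((H1.mul_left (-(a * Real.logb 2 a))).add (H3.mul_left (-(a * Real.logb 2 r)))).tsum_eq]
  -- simplify using a = (1-r)^2 and the closed forms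
  have ha : a = (1 - r) ^ 2 := by rw [h1r, hadef]
  have key1 : a * (1 / (1 - r) ^ 2) = 1 := by
    rw [ha]; field_simp
  have key2 : a * (2 * (1 / (1 - r) ^ 3) - 2 * (1 / (1 - r) ^ 2)) = N := by
    rw [ha, h1r]
    field_simp
    ring
  have e1 : (-(a * Real.logb 2 a)) * (1 / (1 - r) ^ 2)
      = -Real.logb 2 a * (a * (1 / (1 - r) ^ 2)) := by ring
  have e2 : (-(a * Real.logb 2 r)) * (2 * (1 / (1 - r) ^ 3) - 2 * (1 / (1 - r) ^ 2))
      = -Real.logb 2 r * (a * (2 * (1 / (1 - r) ^ 3) - 2 * (1 / (1 - r) ^ 2))) := by ring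
  rw [e1, e2, key1, key2]
  ring

/-- The rational function `(N+2)^2 / (4 (2N+1)(N+1))` tends to `1/8`. -/
lemma rat_limit : Tendsto (fun N : ℝ => (N + 2) ^ 2 / (4 * ((2 * N + 1) * (N + 1))))
    atTop (nhds (1 / 8)) := by
  have t0 : Tendsto (fun N : ℝ => N⁻¹) atTop (nhds 0) := tendsto_inv_atTop_zero
  have tnum : Tendsto (fun N : ℝ => (1 + 2 * N⁻¹) ^ 2) atTop (nhds 1) := by
    have h : Tendsto (fun N : ℝ => 1 + 2 * N⁻¹) atTop (nhds (1 + 2 * 0)) :=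
      tendsto_const_nhds.add (t0.const_mul 2)
    have := h.pow 2
    norm_num at this
    exact this
  have tden : Tendsto (fun N : ℝ => 4 * ((2 + N⁻¹) * (1 + N⁻¹))) atTop (nhds 8) := by
    have h1 : Tendsto (fun N : ℝ => 2 + N⁻¹) atTop (nhds (2 + 0)) :=
      tendsto_const_nhds.add t0
    have h2 : Tendsto (fun N : ℝ => 1 + N⁻¹) atTop (nhds (1 + 0)) :=
      tendsto_const_nhds.add t0
    have := (h1.mul h2).const_mul 4
    norm_num at this; exact this
  have tq : Tendsto (fun N : ℝ => (1 + 2 * N⁻¹) ^ 2 / (4 * ((2 + N⁻¹) * (1 + N⁻¹))))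
      atTop (nhds (1 / 8)) := by
    have h := tnum.div tden (by norm_num)
    norm_num at h
    convert h using 2
    rfl
  refine tq.congr' ?_
  filter_upwards [eventually_ge_atTop (1:ℝ)] with N hN
  have hN0 : N ≠ 0 := by linarith
  have e1 : (1 + 2 * N⁻¹) ^ 2 = (N + 2) ^ 2 / N ^ 2 := by field_simp
  have e2 : 4 * ((2 + N⁻¹) * (1 + N⁻¹)) = 4 * ((2 * N + 1) * (N + 1)) / N ^ 2 := by
    field_simp
  rw [e1, e2, div_div_div_cancel_right₀ (by positivity)]

/-- The denominator `log ((2N+1)(N+1))` tends to infinity. -/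
lemma den_atTop : Tendsto (fun N : ℝ => Real.log ((2 * N + 1) * (N + 1))) atTop atTop := by
  apply Real.tendsto_log_atTop.comp
  have h1 : Tendsto (fun N : ℝ => 2 * N + 1) atTop atTop :=
    tendsto_atTop_add_const_right _ 1 (tendsto_id.const_mul_atTop (by norm_num))
  have h2 : Tendsto (fun N : ℝ => N + 1) atTop atTop :=
    tendsto_atTop_add_const_right _ 1 tendsto_id
  exact h1.atTop_mul_atTop₀ h2

/-- The distillation rate `R(N) = H(p_{X,Y}) / log₂((2N+1)(N+1)) → 1` as `N → ∞`. -/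
theorem stmt13 :
    Filter.Tendsto (fun N : ℝ =>
      (∑' x : ℕ, ∑ y ∈ Finset.range (x + 1),
        -((2 / (N + 2)) ^ 2 * (N / (N + 2)) ^ x) *
          Real.logb 2 ((2 / (N + 2)) ^ 2 * (N / (N + 2)) ^ x)) /
        Real.logb 2 ((2 * N + 1) * (N + 1)))
      Filter.atTop (nhds 1) := by
  set C : ℝ → ℝ := fun N =>
    -Real.log ((2 / (N + 2)) ^ 2) - N * Real.log (N / (N + 2)) with hC
  set D : ℝ → ℝ := fun N => Real.log ((2 * N + 1) * (N + 1)) with hD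
  have hCD : Tendsto (fun N => C N - D N) atTop (nhds (Real.log (1/8) + 2)) := by
    have t1 : Tendsto (fun N : ℝ => Real.log ((N + 2) ^ 2 / (4 * ((2 * N + 1) * (N + 1)))))
        atTop (nhds (Real.log (1/8))) :=
      ((Real.continuousAt_log (by norm_num)).tendsto.comp rat_limit)
    have t2 : Tendsto (fun N : ℝ => N * Real.log (1 + 2 / N)) atTop (nhds 2) :=
      Real.tendsto_mul_log_one_add_div_atTop 2
    refine (t1.add t2).congr' ?_
    filter_upwards [eventually_ge_atTop (1:ℝ)] with N hN
    have hN0 : (0:ℝ) < N := by linarith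
    have hN2 : (0:ℝ) < N + 2 := by linarith
    have h1 : -Real.log ((2 / (N + 2)) ^ 2) = Real.log ((N + 2) ^ 2 / 4) := by
      rw [← Real.log_inv]
      congr 1
      rw [inv_eq_iff_eq_inv, inv_div]
      field_simp
      ring
    have h2 : Real.log (1 + 2 / N) = -Real.log (N / (N + 2)) := by
      rw [← Real.log_inv]
      congr 1
      rw [inv_div, add_div, div_self hN0.ne']
    have h3 : Real.log ((N + 2) ^ 2 / (4 * ((2 * N + 1) * (N + 1))))
        = Real.log ((N + 2) ^ 2 / 4) - Real.log ((2 * N + 1) * (N + 1)) := by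
      rw [← div_div, Real.log_div (by positivity) (by positivity)]
    simp only [hC, hD]
    rw [h3, ← h1, h2]
    ring
  have hDtop : Tendsto D atTop atTop := den_atTop
  have hmain : Tendsto (fun N => C N / D N) atTop (nhds 1) := by
    have h0 : Tendsto (fun N => (C N - D N) / D N) atTop (nhds 0) :=
      hCD.div_atTop hDtop
    have h1 : Tendsto (fun N => 1 + (C N - D N) / D N) atTop (nhds (1 + 0)) :=
      tendsto_const_nhds.add h0
    rw [add_zero] at h1
    refine h1.congr' ?_
    filter_upwards [hDtop.eventually_gt_atTop 0] with N hDN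
    field_simp
    ring
  refine hmain.congr' ?_
  filter_upwards [eventually_ge_atTop (1:ℝ)] with N hN
  have hN0 : (0:ℝ) < N := by linarith
  rw [entropy_closed_form hN0]
  simp only [Real.logb]
  rw [show -(Real.log ((2 / (N + 2)) ^ 2) / Real.log 2)
        - N * (Real.log (N / (N + 2)) / Real.log 2)
      = (-Real.log ((2 / (N + 2)) ^ 2) - N * Real.log (N / (N + 2))) / Real.log 2 by ring,
    div_div_div_cancel_right₀
      (Real.log_ne_zero_of_pos_of_ne_one (by norm_num) (by norm_num))]
end

section
/- For even N, the entropy of coherence of the pair-correlated state Ψ(π/4, N/2)_N is eventually bounded below by c·log₂ N for some constant c > 0; specifically, there exist c > 0 and N₀ such that for all even N ≥ N₀, ∑_{k} -p(k) log₂ p(k) ≥ c log₂ N, where p(k) = |⟨k, N−k|Ψ(π/4,N/2)_N⟩|². -/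
open Finset Real

/-- Vandermonde sum of squares: `∑ C(m,j)² = C(2m,m)`. -/
lemma vdm (m : ℕ) : ∑ j ∈ Finset.range (m + 1), (m.choose j) ^ 2 = (2 * m).choose m := by
  have h := Nat.add_choose_eq m m m
  rw [Finset.Nat.sum_antidiagonal_eq_sum_range_succ (fun i j => m.choose i * m.choose j) m] at h
  rw [two_mul, h]
  refine Finset.sum_congr rfl fun j hj => ?_
  have hjm : j ≤ m := Nat.lt_succ_iff.mp (Finset.mem_range.mp hj)
  rw [Nat.choose_symm hjm, sq]

/-- Upper bound: `(n+1)·centralBinom(n)² ≤ 16^n`. -/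
lemma cb_up (n : ℕ) : (n + 1) * (Nat.centralBinom n) ^ 2 ≤ 16 ^ n := by
  induction n with
  | zero => simp [Nat.centralBinom]
  | succ n ih =>
    have key := Nat.succ_mul_centralBinom_succ n
    have h1 : (n + 2) * (Nat.centralBinom (n + 1)) ^ 2 * (n + 1) ^ 3 ≤ 16 ^ (n + 1) * (n + 1) ^ 3 := by
      have e1 : (n + 2) * (Nat.centralBinom (n + 1)) ^ 2 * (n + 1) ^ 3
          = (n + 2) * ((n + 1) * Nat.centralBinom (n + 1)) ^ 2 * (n + 1) := by ring
      rw [e1, key]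
      have e2 : (n + 2) * (2 * (2 * n + 1) * Nat.centralBinom n) ^ 2 * (n + 1)
          = 4 * (n + 2) * (2 * n + 1) ^ 2 * ((n + 1) * (Nat.centralBinom n) ^ 2) := by ring
      rw [e2]
      calc 4 * (n + 2) * (2 * n + 1) ^ 2 * ((n + 1) * (Nat.centralBinom n) ^ 2)
          ≤ 4 * (n + 2) * (2 * n + 1) ^ 2 * 16 ^ n := by
            exact Nat.mul_le_mul_left _ ih
        _ ≤ 16 * (n + 1) ^ 3 * 16 ^ n := by
            have : 4 * (n + 2) * (2 * n + 1) ^ 2 ≤ 16 * (n + 1) ^ 3 := by nlinarith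
            exact Nat.mul_le_mul_right _ this
        _ = 16 ^ (n + 1) * (n + 1) ^ 3 := by ring
    exact Nat.le_of_mul_le_mul_right h1 (by positivity)

/-- Lower bound: `16^n ≤ 4n·centralBinom(n)²` for `n ≥ 1`. -/
lemma cb_low (n : ℕ) (hn : 1 ≤ n) : 16 ^ n ≤ 4 * n * (Nat.centralBinom n) ^ 2 := by
  induction n with
  | zero => omega
  | succ n ih =>
    rcases Nat.eq_or_lt_of_le hn with h | h
    · have : n = 0 := by omega
      subst this
      simp [Nat.centralBinom, Nat.choose]
    · have hn1 : 1 ≤ n := by omega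
      have ih' := ih hn1
      have key := Nat.succ_mul_centralBinom_succ n
      have h1 : 16 ^ (n + 1) * (n + 1) ≤ 4 * (n + 1) * (Nat.centralBinom (n + 1)) ^ 2 * (n + 1) := by
        have e1 : 4 * (n + 1) * (Nat.centralBinom (n + 1)) ^ 2 * (n + 1)
            = 4 * ((n + 1) * Nat.centralBinom (n + 1)) ^ 2 := by ring
        rw [e1, key]
        have e2 : 4 * (2 * (2 * n + 1) * Nat.centralBinom n) ^ 2
            = 16 * (2 * n + 1) ^ 2 * (Nat.centralBinom n) ^ 2 := by ring
        rw [e2]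
        calc 16 ^ (n + 1) * (n + 1) = 16 * (n + 1) * 16 ^ n := by ring
          _ ≤ 16 * (n + 1) * (4 * n * (Nat.centralBinom n) ^ 2) := Nat.mul_le_mul_left _ ih'
          _ = 64 * n * (n + 1) * (Nat.centralBinom n) ^ 2 := by ring
          _ ≤ 16 * (2 * n + 1) ^ 2 * (Nat.centralBinom n) ^ 2 := by
              have : 64 * n * (n + 1) ≤ 16 * (2 * n + 1) ^ 2 := by nlinarith
              exact Nat.mul_le_mul_right _ this
      exact Nat.le_of_mul_le_mul_right h1 (by omega)

/-- `m²·C(m,⌊m/2⌋)⁴ ≤ 4·16^m`. -/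
lemma mid_sq (m : ℕ) : m ^ 2 * (m.choose (m / 2)) ^ 4 ≤ 4 * 16 ^ m := by
  rcases Nat.even_or_odd m with ⟨t, ht⟩ | ⟨t, ht⟩
  · subst ht
    have hdiv : (t + t) / 2 = t := by omega
    rw [hdiv]
    have hA : (t + t).choose t = Nat.centralBinom t := by
      rw [Nat.centralBinom_eq_two_mul_choose]; congr 1; ring
    rw [hA]
    have hup := cb_up t
    calc (t + t) ^ 2 * (Nat.centralBinom t) ^ 4
        ≤ 4 * ((t + 1) * (Nat.centralBinom t) ^ 2) ^ 2 := by nlinarith [sq_nonneg (Nat.centralBinom t)]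
      _ ≤ 4 * (16 ^ t) ^ 2 := by
          exact Nat.mul_le_mul_left _ (Nat.pow_le_pow_left hup 2)
      _ = 4 * 16 ^ (t + t) := by rw [← pow_mul, mul_two]
  · subst ht
    have hdiv : (2 * t + 1) / 2 = t := by omega
    rw [hdiv]
    have hA : (2 * t + 1).choose t ≤ 2 * (2 * t).choose t := by
      have hsymm : (2 * t + 1).choose t = (2 * t + 1).choose (t + 1) := by
        rw [← Nat.choose_symm (show t + 1 ≤ 2 * t + 1 by omega)]
        congr 1
        omega
      have pascal : (2 * t + 1).choose (t + 1) = (2 * t).choose t + (2 * t).choose (t + 1) :=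
        Nat.choose_succ_succ _ _
      have hmid : (2 * t).choose (t + 1) ≤ (2 * t).choose t := by
        have h := Nat.choose_le_middle (t + 1) (2 * t)
        have hd : (2 * t) / 2 = t := by omega
        rwa [hd] at h
      omega
    have hB : (2 * t).choose t = Nat.centralBinom t := (Nat.centralBinom_eq_two_mul_choose t).symm
    rw [hB] at hA
    have hup := cb_up t
    have hA4 : ((2 * t + 1).choose t) ^ 4 ≤ 16 * (Nat.centralBinom t) ^ 4 := by
      calc ((2 * t + 1).choose t) ^ 4 ≤ (2 * Nat.centralBinom t) ^ 4 := Nat.pow_le_pow_left hA 4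
        _ = 16 * (Nat.centralBinom t) ^ 4 := by ring
    calc (2 * t + 1) ^ 2 * ((2 * t + 1).choose t) ^ 4
        ≤ (2 * t + 1) ^ 2 * (16 * (Nat.centralBinom t) ^ 4) := Nat.mul_le_mul_left _ hA4
      _ ≤ 64 * ((t + 1) * (Nat.centralBinom t) ^ 2) ^ 2 := by nlinarith [sq_nonneg (Nat.centralBinom t)]
      _ ≤ 64 * (16 ^ t) ^ 2 := Nat.mul_le_mul_left _ (Nat.pow_le_pow_left hup 2)
      _ = 4 * 16 ^ (2 * t + 1) := by rw [← pow_mul]; rw [pow_add, pow_mul]; ring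

/-- Key bound: for `m ≥ 512`, `2m·A⁸ ≤ B⁴` with `A = C(m,⌊m/2⌋)`, `B = C(2m,m)`. -/
lemma key_bound (m : ℕ) (hm : 512 ≤ m) :
    2 * m * (m.choose (m / 2)) ^ 8 ≤ ((2 * m).choose m) ^ 4 := by
  set A := m.choose (m / 2)
  have hB : (2 * m).choose m = Nat.centralBinom m := (Nat.centralBinom_eq_two_mul_choose m).symm
  set B := Nat.centralBinom m
  rw [hB]
  have hm1 : 1 ≤ m := by omega
  have h1 : m ^ 2 * A ^ 4 ≤ 4 * 16 ^ m := mid_sq m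
  have h2 : 16 ^ m ≤ 4 * m * B ^ 2 := cb_low m hm1
  -- m² A⁴ ≤ 16 m B², so m A⁴ ≤ 16 B²
  have h3 : m * (m * A ^ 4) ≤ m * (16 * B ^ 2) := by
    calc m * (m * A ^ 4) = m ^ 2 * A ^ 4 := by ring
      _ ≤ 4 * 16 ^ m := h1
      _ ≤ 4 * (4 * m * B ^ 2) := Nat.mul_le_mul_left _ h2
      _ = m * (16 * B ^ 2) := by ring
  have h4 : m * A ^ 4 ≤ 16 * B ^ 2 := Nat.le_of_mul_le_mul_left h3 (by omega)
  have h5 : m ^ 2 * A ^ 8 ≤ 256 * B ^ 4 := by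
    calc m ^ 2 * A ^ 8 = (m * A ^ 4) ^ 2 := by ring
      _ ≤ (16 * B ^ 2) ^ 2 := Nat.pow_le_pow_left h4 2
      _ = 256 * B ^ 4 := by ring
  have h6 : 256 * (2 * m * A ^ 8) ≤ 256 * B ^ 4 := by
    calc 256 * (2 * m * A ^ 8) = 512 * m * A ^ 8 := by ring
      _ ≤ m * m * A ^ 8 := by
          exact Nat.mul_le_mul_right _ (Nat.mul_le_mul_right _ hm)
      _ = m ^ 2 * A ^ 8 := by ring
      _ ≤ 256 * B ^ 4 := h5
  exact Nat.le_of_mul_le_mul_left h6 (by norm_num)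

/-- The entropy of coherence of the pair-correlated state `Ψ(π/4, N/2)_N` (with `N = 2m`,
nonzero Fock probabilities `p(2j) = C(m,j)²/C(2m,m)`) is eventually at least `c log₂ N`. -/
theorem stmt18 :
    ∃ c : ℝ, 0 < c ∧ ∃ N₀ : ℕ, ∀ m : ℕ, N₀ ≤ m →
      c * Real.logb 2 ((2 * m : ℕ) : ℝ) ≤
        ∑ j ∈ Finset.range (m + 1),
          -(((m.choose j : ℝ) ^ 2 / ((2 * m).choose m : ℝ))) *
            Real.logb 2 ((m.choose j : ℝ) ^ 2 / ((2 * m).choose m : ℝ)) := by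
  refine ⟨1/4, by norm_num, 512, fun m hm => ?_⟩
  set A : ℕ := m.choose (m / 2) with hA
  set B : ℕ := (2 * m).choose m with hBdef
  have hm1 : 1 ≤ m := by omega
  have hBpos : 0 < B := Nat.choose_pos (by omega)
  have hBposR : (0:ℝ) < (B:ℝ) := by exact_mod_cast hBpos
  have hApos : 0 < A := Nat.choose_pos (Nat.div_le_self m 2)
  have hAposR : (0:ℝ) < (A:ℝ) := by exact_mod_cast hApos
  set P : ℝ := (A:ℝ)^2 / B with hP
  have hPpos : 0 < P := by positivity
  -- probabilities
  have hpj_pos : ∀ j ∈ Finset.range (m + 1), (0:ℝ) < (m.choose j : ℝ)^2 / B := by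
    intro j hj
    have : 0 < m.choose j := Nat.choose_pos (Nat.lt_succ_iff.mp (Finset.mem_range.mp hj))
    have : (0:ℝ) < (m.choose j : ℝ) := by exact_mod_cast this
    positivity
  have hpj_le : ∀ j ∈ Finset.range (m + 1), (m.choose j : ℝ)^2 / B ≤ P := by
    intro j hj
    rw [hP]
    apply (div_le_div_iff_of_pos_right hBposR).mpr
    have h := Nat.choose_le_middle j m
    have h1 : (m.choose j : ℝ) ≤ (A:ℝ) := by exact_mod_cast h
    have h0 : (0:ℝ) ≤ (m.choose j : ℝ) := by positivity
    nlinarith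
  -- sum of probabilities is 1
  have hsum : ∑ j ∈ Finset.range (m + 1), (m.choose j : ℝ)^2 / B = 1 := by
    rw [← Finset.sum_div]
    rw [div_eq_one_iff_eq (ne_of_gt hBposR)]
    exact_mod_cast congrArg (Nat.cast : ℕ → ℝ) (vdm m)
  -- entropy lower bound by -logb 2 P
  have hstep : -Real.logb 2 P ≤
      ∑ j ∈ Finset.range (m + 1),
        -((m.choose j : ℝ)^2 / B) * Real.logb 2 ((m.choose j : ℝ)^2 / B) := by
    have : ∀ j ∈ Finset.range (m + 1),
        ((m.choose j : ℝ)^2 / B) * (-Real.logb 2 P) ≤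
          -((m.choose j : ℝ)^2 / B) * Real.logb 2 ((m.choose j : ℝ)^2 / B) := by
      intro j hj
      have h1 : Real.logb 2 ((m.choose j : ℝ)^2 / B) ≤ Real.logb 2 P :=
        Real.logb_le_logb_of_le (by norm_num) (hpj_pos j hj) (hpj_le j hj)
      have h2 : (0:ℝ) ≤ (m.choose j : ℝ)^2 / B := le_of_lt (hpj_pos j hj)
      nlinarith
    calc -Real.logb 2 P = (∑ j ∈ Finset.range (m + 1), (m.choose j : ℝ)^2 / B) * (-Real.logb 2 P) := by
          rw [hsum, one_mul]
      _ = ∑ j ∈ Finset.range (m + 1), ((m.choose j : ℝ)^2 / B) * (-Real.logb 2 P) := by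
          rw [Finset.sum_mul]
      _ ≤ _ := Finset.sum_le_sum this
  refine le_trans ?_ hstep
  -- -logb 2 P = logb 2 (B / A²) and (B/A²)⁴ ≥ 2m
  have hinv : -Real.logb 2 P = Real.logb 2 ((B:ℝ) / (A:ℝ)^2) := by
    rw [← Real.logb_inv]
    congr 1
    rw [hP]
    field_simp
  rw [hinv]
  have hkey : ((2 * m : ℕ) : ℝ) ≤ ((B:ℝ) / (A:ℝ)^2) ^ 4 := by
    have h := key_bound m hm
    have hR : (2 * m : ℝ) * (A:ℝ)^8 ≤ (B:ℝ)^4 := by exact_mod_cast h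
    rw [div_pow]
    rw [le_div_iff₀ (by positivity)]
    calc ((2 * m : ℕ) : ℝ) * ((A:ℝ)^2)^4 = (2 * m : ℝ) * (A:ℝ)^8 := by push_cast; ring
      _ ≤ (B:ℝ)^4 := hR
  have hmpos : (0:ℝ) < ((2 * m : ℕ) : ℝ) := by
    have : 0 < 2 * m := by omega
    exact_mod_cast this
  have hlog : Real.logb 2 ((2 * m : ℕ) : ℝ) ≤ 4 * Real.logb 2 ((B:ℝ) / (A:ℝ)^2) := by
    have h4 : (4:ℝ) * Real.logb 2 ((B:ℝ) / (A:ℝ)^2) = Real.logb 2 (((B:ℝ) / (A:ℝ)^2) ^ 4) := by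
      rw [Real.logb_pow]; norm_num
    rw [h4]
    exact Real.logb_le_logb_of_le (by norm_num) hmpos hkey
  linarith
end

section
/- The two-particle output of the Hong–Ou–Mandel-type channel satisfies: applying the beamsplitter unitary U = exp(i(π/4)(a₁*a₃ + a₃*a₁)) to the state a₃*(c₁a₁* + c₂a₂*)|VAC⟩ and tracing out mode 3 yields the mixed state (|c₁|²/2)|VAC⟩⟨VAC| + (|c₂|²/2)|0,1⟩⟨0,1| + (1/2)|φ⟩⟨φ| on modes 1,2, where |φ⟩ = (c₁ a₁*²/√2 + c₂ a₁*a₂*)|VAC⟩. -/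
noncomputable section

/-- Amplitude function of a 3-mode bosonic Fock state in the occupation-number basis. -/
abbrev Fock3 := (ℕ × ℕ × ℕ) → ℂ

/-- Creation operator on mode 1. -/
def adag1 (ψ : Fock3) : Fock3 := fun n =>
  match n with
  | (0, _, _) => 0
  | (n1 + 1, n2, n3) => (Real.sqrt (n1 + 1) : ℂ) * ψ (n1, n2, n3)

/-- Creation operator on mode 2. -/
def adag2 (ψ : Fock3) : Fock3 := fun n =>
  match n with
  | (_, 0, _) => 0
  | (n1, n2 + 1, n3) => (Real.sqrt (n2 + 1) : ℂ) * ψ (n1, n2, n3)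

/-- Creation operator on mode 3. -/
def adag3 (ψ : Fock3) : Fock3 := fun n =>
  match n with
  | (_, _, 0) => 0
  | (n1, n2, n3 + 1) => (Real.sqrt (n3 + 1) : ℂ) * ψ (n1, n2, n3)

/-- Annihilation operator on mode 1. -/
def ann1 (ψ : Fock3) : Fock3 := fun n =>
  (Real.sqrt (n.1 + 1) : ℂ) * ψ (n.1 + 1, n.2.1, n.2.2)

/-- Annihilation operator on mode 2. -/
def ann2 (ψ : Fock3) : Fock3 := fun n =>
  (Real.sqrt (n.2.1 + 1) : ℂ) * ψ (n.1, n.2.1 + 1, n.2.2)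

/-- Annihilation operator on mode 3. -/
def ann3 (ψ : Fock3) : Fock3 := fun n =>
  (Real.sqrt (n.2.2 + 1) : ℂ) * ψ (n.1, n.2.1, n.2.2 + 1)

/-- The vacuum state. -/
def vac : Fock3 := fun n => if n = (0, 0, 0) then 1 else 0

/-- Two-mode vacuum amplitude function `|0,0⟩`. -/
def vac2 : ℕ × ℕ → ℂ := fun a => if a = (0, 0) then 1 else 0

/-- Two-mode state `|0,1⟩`. -/
def e01 : ℕ × ℕ → ℂ := fun a => if a = (0, 1) then 1 else 0

/-- The two-particle state `|φ⟩ = (c₁ a₁*²/√2 + c₂ a₁*a₂*)|VAC⟩ = c₁|2,0⟩ + c₂|1,1⟩`. -/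
def phiState (c₁ c₂ : ℂ) : ℕ × ℕ → ℂ := fun a =>
  if a = (2, 0) then c₁ else if a = (1, 1) then c₂ else 0

set_option maxHeartbeats 4000000 in
/-- Hong–Ou–Mandel-type channel: applying the beamsplitter unitary `U` (acting as
`U*a₁U = (a₁+ia₃)/√2`, `U*a₃U = (ia₁+a₃)/√2`, `U*a₂U = a₂`, preserving the vacuum)
to `a₃*(c₁a₁*+c₂a₂*)|VAC⟩` and tracing out mode 3 yields
`(|c₁|²/2)|VAC⟩⟨VAC| + (|c₂|²/2)|0,1⟩⟨0,1| + (1/2)|φ⟩⟨φ|`. -/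
theorem stmt19 (c₁ c₂ : ℂ)
    (hc : ‖c₁‖ ^ 2 + ‖c₂‖ ^ 2 = 1)
    (U : Fock3 →ₗ[ℂ] Fock3)
    (hvac : U vac = vac)
    (hU1 : ∀ ψ, ann1 (U ψ) = U ((Real.sqrt 2 : ℂ)⁻¹ • (ann1 ψ + Complex.I • ann3 ψ)))
    (hU3 : ∀ ψ, ann3 (U ψ) = U ((Real.sqrt 2 : ℂ)⁻¹ • (Complex.I • ann1 ψ + ann3 ψ)))
    (hU2 : ∀ ψ, ann2 (U ψ) = U (ann2 ψ))
    (hU1d : ∀ ψ, adag1 (U ψ) = U ((Real.sqrt 2 : ℂ)⁻¹ • (adag1 ψ - Complex.I • adag3 ψ)))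
    (hU3d : ∀ ψ, adag3 (U ψ) = U ((Real.sqrt 2 : ℂ)⁻¹ • (adag3 ψ - Complex.I • adag1 ψ)))
    (hU2d : ∀ ψ, adag2 (U ψ) = U (adag2 ψ)) :
    ∀ a b : ℕ × ℕ,
      (∑' n₃ : ℕ,
        (U (adag3 (c₁ • adag1 vac + c₂ • adag2 vac))) (a.1, a.2, n₃) *
          (starRingEnd ℂ) ((U (adag3 (c₁ • adag1 vac + c₂ • adag2 vac))) (b.1, b.2, n₃))) =
      ((‖c₁‖ ^ 2 / 2 : ℝ) : ℂ) * vac2 a * (starRingEnd ℂ) (vac2 b)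
      + ((‖c₂‖ ^ 2 / 2 : ℝ) : ℂ) * e01 a * (starRingEnd ℂ) (e01 b)
      + (1 / 2 : ℂ) * phiState c₁ c₂ a * (starRingEnd ℂ) (phiState c₁ c₂ b) := by
  have hs2 : (Real.sqrt 2 : ℂ) * (Real.sqrt 2 : ℂ) = 2 := by
    norm_cast
    exact Real.mul_self_sqrt (by norm_num)
  have hs0 : (Real.sqrt 2 : ℂ) ≠ 0 := by
    simp only [ne_eq, Complex.ofReal_eq_zero]
    exact Real.sqrt_ne_zero'.mpr (by norm_num)
  have h1 : ∀ ψ, U (adag1 ψ) = (Real.sqrt 2 : ℂ)⁻¹ • (adag1 (U ψ) + Complex.I • adag3 (U ψ)) := by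
    intro ψ
    have hA := hU1d ψ
    have hB := hU3d ψ
    rw [map_smul, map_sub, map_smul] at hA hB
    rw [hA, hB]
    match_scalars
    · field_simp
      linear_combination Complex.I_sq + hs2
    · field_simp
      ring
  have h3 : ∀ ψ, U (adag3 ψ) = (Real.sqrt 2 : ℂ)⁻¹ • (adag3 (U ψ) + Complex.I • adag1 (U ψ)) := by
    intro ψ
    have hA := hU1d ψ
    have hB := hU3d ψ
    rw [map_smul, map_sub, map_smul] at hA hB
    rw [hA, hB]
    match_scalars
    · field_simp
      linear_combination Complex.I_sq + hs2
    · field_simp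
      ring
  have hU2' : ∀ ψ, U (adag2 ψ) = adag2 (U ψ) := fun ψ => (hU2d ψ).symm
  have hS : U (c₁ • adag1 vac + c₂ • adag2 vac) =
      fun n => if n = (1,0,0) then (Real.sqrt 2 : ℂ)⁻¹ * c₁
        else if n = (0,0,1) then (Real.sqrt 2 : ℂ)⁻¹ * Complex.I * c₁
        else if n = (0,1,0) then c₂ else 0 := by
    rw [map_add, map_smul, map_smul, h1, hU2', hvac]
    funext n
    obtain ⟨n1, n2, n3⟩ := n
    rcases n1 with _|_|n1 <;> rcases n2 with _|_|n2 <;> rcases n3 with _|_|n3 <;>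
      simp [adag1, adag2, adag3, vac, Prod.ext_iff, Real.sqrt_one] <;>
      norm_num <;> ring
  have hχ : U (adag3 (c₁ • adag1 vac + c₂ • adag2 vac)) =
      fun n => if n = (2,0,0) then (Real.sqrt 2 : ℂ)⁻¹ * Complex.I * c₁
        else if n = (0,0,2) then (Real.sqrt 2 : ℂ)⁻¹ * Complex.I * c₁
        else if n = (0,1,1) then (Real.sqrt 2 : ℂ)⁻¹ * c₂
        else if n = (1,1,0) then (Real.sqrt 2 : ℂ)⁻¹ * Complex.I * c₂ else 0 := by
    rw [h3, hS]
    clear hS hU2' h1 h3 hs2 hU1 hU2 hU3 hU1d hU2d hU3d hvac hc U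
    funext n
    obtain ⟨n1, n2, n3⟩ := n
    rcases n1 with _|_|_|n1 <;> rcases n2 with _|_|n2 <;> rcases n3 with _|_|_|n3 <;>
      simp [adag1, adag3, Prod.ext_iff, Real.sqrt_one]
    all_goals try norm_num
    all_goals try field_simp
    all_goals try ring
    all_goals linear_combination c₁ * Complex.I_sq
  have habs1 : ((‖c₁‖ ^ 2 / 2 : ℝ) : ℂ) = c₁ * (starRingEnd ℂ) c₁ / 2 := by
    rw [Complex.sq_norm, Complex.ofReal_div, Complex.mul_conj]
    norm_num
  have habs2 : ((‖c₂‖ ^ 2 / 2 : ℝ) : ℂ) = c₂ * (starRingEnd ℂ) c₂ / 2 := by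
    rw [Complex.sq_norm, Complex.ofReal_div, Complex.mul_conj]
    norm_num
  have hsi2 : ((Real.sqrt 2 : ℂ))⁻¹ ^ 2 = (2:ℂ)⁻¹ := by
    rw [inv_pow, sq, hs2]
  intro a b
  obtain ⟨a1, a2⟩ := a
  obtain ⟨b1, b2⟩ := b
  rw [hχ, habs1, habs2]
  clear hχ hS hU2' h1 h3 hU1 hU2 hU3 hU1d hU2d hU3d hvac hc habs1 habs2 U
  rw [tsum_eq_sum (s := Finset.range 3) (by
    intro n hn
    simp only [Finset.mem_range] at hn
    have h0 : ¬ (n = 0) := by omega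
    have h1' : ¬ (n = 1) := by omega
    have h2' : ¬ (n = 2) := by omega
    simp [Prod.ext_iff, h0, h1', h2'])]
  rw [Finset.sum_range_succ, Finset.sum_range_succ, Finset.sum_range_one]
  rcases a1 with _|_|_|a1 <;> rcases a2 with _|_|a2 <;>
    rcases b1 with _|_|_|b1 <;> rcases b2 with _|_|b2 <;>
    simp [vac2, e01, phiState, Prod.ext_iff, map_mul, map_inv₀,
      Complex.conj_ofReal, Complex.conj_I]
  all_goals ring_nf
  all_goals simp [Complex.I_sq, hsi2]
  all_goals try ring

end
end
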